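/- Let A be a subset of a group G such that for every finite set F ⊆ G the complement G \ FA is large. Then there exists a left-invariant totally bounded topology on G with respect to which A is nowhere dense (in fact the family τ = {∅} ∪ {U ⊆ G : U ⊇ G \ FA for some finite F ⊆ G} is such a topology, A is closed in it, and A has empty interior). -/

import Mathlib

open scoped Pointwise Topology

/-- A subset `A` of a group `G` is *large* if `F * A = G` for some finite `F ⊆ G`. -/
def IsLarge {G : Type*} [Group G] (A : Set G) : Prop :=
  ∃ F : Finset G, (F : Set G) * A = Set.univ

/-- A topology on a group `G` is *left-invariant* if every left translation
`x ↦ g * x` is a homeomorphism. -/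
def IsLeftInvariantTop {G : Type*} [Group G] (t : TopologicalSpace G) : Prop :=
  ∀ g : G, @IsHomeomorph G G t t (fun x => g * x)

/-- A topology on a group `G` is *totally bounded* if every nonempty open set is large. -/
def IsTotallyBoundedTop {G : Type*} [Group G] (t : TopologicalSpace G) : Prop :=
  ∀ U : Set G, IsOpen[t] U → U.Nonempty → IsLarge U

/-- If `G \ FA` is large for every finite `F ⊆ G`, then the family
`τ = {∅} ∪ {U ⊆ G : U ⊇ G \ FA for some finite F ⊆ G}` is a left-invariant totally bounded
topology on `G` in which `A` is closed, has empty interior, and is nowhere dense. -/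
theorem exists_leftInvariant_totallyBounded_topology_nowhereDense
    {G : Type*} [Group G] (A : Set G)
    (h : ∀ F : Finset G, IsLarge ((Set.univ : Set G) \ ((F : Set G) * A))) :
    ∃ t : TopologicalSpace G,
      (∀ U : Set G, IsOpen[t] U ↔
        (U = ∅ ∨ ∃ F : Finset G, (Set.univ : Set G) \ ((F : Set G) * A) ⊆ U)) ∧
      IsLeftInvariantTop t ∧ IsTotallyBoundedTop t ∧
      @IsClosed G t A ∧ @interior G t A = ∅ ∧
      @interior G t (@closure G t A) = ∅ := by
  classical
  set P : Set G → Prop := fun U =>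
    U = ∅ ∨ ∃ F : Finset G, (Set.univ : Set G) \ ((F : Set G) * A) ⊆ U with hP
  have hmono : ∀ U V : Set G, P U → U ⊆ V → U.Nonempty → P V := by
    rintro U V (rfl | ⟨F, hF⟩) hUV hne
    · exact absurd hne (by simp)
    · exact Or.inr ⟨F, hF.trans hUV⟩
  let t : TopologicalSpace G :=
    { IsOpen := P
      isOpen_univ := Or.inr ⟨∅, by simp⟩
      isOpen_inter := by
        rintro U V (rfl | ⟨F₁, h₁⟩) hV
        · exact Or.inl (by simp)
        rcases hV with rfl | ⟨F₂, h₂⟩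
        · exact Or.inl (by simp)
        · refine Or.inr ⟨F₁ ∪ F₂, ?_⟩
          intro x hx
          have hx' : x ∉ ((F₁ : Set G) ∪ (F₂ : Set G)) * A := by
            simpa [Finset.coe_union] using hx.2
          rw [Set.union_mul] at hx'
          exact ⟨h₁ ⟨trivial, fun hc => hx' (Or.inl hc)⟩,
            h₂ ⟨trivial, fun hc => hx' (Or.inr hc)⟩⟩
      isOpen_sUnion := by
        intro S hS
        by_cases hne : (⋃₀ S).Nonempty
        · obtain ⟨x, U, hU, hx⟩ := hne
          exact hmono U _ (hS U hU) (Set.subset_sUnion_of_mem hU) ⟨x, hx⟩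
        · exact Or.inl (Set.not_nonempty_iff_eq_empty.mp hne) }
  have hopen : ∀ U : Set G, IsOpen[t] U ↔ P U := fun _ => Iff.rfl
  have hGne : (Set.univ : Set G).Nonempty := ⟨1, trivial⟩
  -- A is closed
  have hclosed : @IsClosed G t A := by
    refine ⟨Or.inr ⟨{1}, ?_⟩⟩
    intro x hx
    simpa using fun hc => hx.2 (by simpa using hc)
  -- interior of A is empty
  have hint : @interior G t A = ∅ := by
    by_contra hne
    have hne' : (@interior G t A).Nonempty := Set.nonempty_iff_ne_empty.mpr hne
    have hop : P (@interior G t A) := @isOpen_interior G t A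
    rcases hop with he | ⟨F, hF⟩
    · exact hne he
    · have hsub : (Set.univ : Set G) \ ((F : Set G) * A) ⊆ A :=
        hF.trans (@interior_subset G t A)
      have hcov : ((((F : Finset G) ∪ {1}) : Finset G) : Set G) * A = Set.univ := by
        ext x
        simp only [Set.mem_univ, iff_true, Finset.coe_union, Finset.coe_singleton,
          Set.union_mul]
        by_cases hx : x ∈ (F : Set G) * A
        · exact Or.inl hx
        · exact Or.inr (by simpa using hsub ⟨trivial, hx⟩)
      obtain ⟨F', hF'⟩ := h ((F : Finset G) ∪ {1})
      rw [hcov] at hF'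
      simp only [Set.diff_self, Set.mul_empty] at hF'
      exact (Set.empty_ne_univ hF').elim
  -- left invariance
  have hli : IsLeftInvariantTop t := by
    intro g
    have key : ∀ g : G, ∀ U : Set G, P U → P ((g * ·) ⁻¹' U) := by
      rintro g U (rfl | ⟨F, hF⟩)
      · exact Or.inl rfl
      · refine Or.inr ⟨Finset.image (g⁻¹ * ·) F, ?_⟩
        intro x hx
        refine hF ⟨trivial, fun ⟨f, hf, a, ha, hfa⟩ => ?_⟩
        refine hx.2 ⟨g⁻¹ * f, Finset.mem_image_of_mem _ hf, a, ha, ?_⟩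
        have hfa' : f * a = g * x := hfa
        show g⁻¹ * f * a = x
        rw [mul_assoc, hfa']; group
      -- need: x ∉ (image (g⁻¹*·) F) * A → g*x ∉ F*A
    constructor
    · exact @continuous_def G G t t _ |>.mpr (fun U hU => key g U hU)
    · intro U hU
      have : (fun x => g * x) '' U = (fun x => g⁻¹ * x) ⁻¹' U := by
        ext x; constructor
        · rintro ⟨y, hy, rfl⟩; simpa using hy
        · intro hx; exact ⟨g⁻¹ * x, hx, by group⟩
      rw [this]
      exact key g⁻¹ U hU
    · exact (Equiv.mulLeft g).bijective
  -- totally bounded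
  have htb : IsTotallyBoundedTop t := by
    rintro U (rfl | ⟨F, hF⟩) hne
    · exact absurd hne (by simp)
    · obtain ⟨F', hF'⟩ := h F
      refine ⟨F', Set.eq_univ_of_univ_subset ?_⟩
      rw [← hF']
      exact Set.mul_subset_mul_left hF
  refine ⟨t, hopen, hli, htb, hclosed, hint, ?_⟩
  rw [@IsClosed.closure_eq G t A hclosed]
  exact hint
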